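/- Under the hypotheses that R(λ) is symmetric for all λ, the matrix solutions A (with A(0)=Id, A'(0)=0) and B (with B(0)=0, B'(0)=Id) of X'' = R X satisfy: A(λ)ᵀ A'(λ) is symmetric for all λ, and B(λ)ᵀ B'(λ) is symmetric for all λ. -/

import Mathlib

open Matrix

attribute [local instance] Matrix.normedAddCommGroup Matrix.normedSpace

section Aux

variable {n : ℕ}

local notation "M" => Matrix (Fin n) (Fin n) ℝ

/-- Matrix multiplication as a continuous linear map in the first argument. -/
noncomputable def mulCLM : M →L[ℝ] M →L[ℝ] M :=
  LinearMap.toContinuousLinearMap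
    { toFun := fun a => LinearMap.toContinuousLinearMap (LinearMap.mul ℝ M a)
      map_add' := by intro a b; ext c; simp [add_mul]
      map_smul' := by intro r a; ext c; simp [smul_mul_assoc] }

@[simp] lemma mulCLM_apply (a b : M) : mulCLM a b = a * b := rfl

lemma HasDerivAt.matrix_mul {f g : ℝ → M} {f' g' : M} {l : ℝ}
    (hf : HasDerivAt f f' l) (hg : HasDerivAt g g' l) :
    HasDerivAt (fun x => f x * g x) (f' * g l + f l * g') l := by
  letI : NormedAddCommGroup (M →L[ℝ] M) := ContinuousLinearMap.toNormedAddCommGroup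
  letI : NormedSpace ℝ (M →L[ℝ] M) := ContinuousLinearMap.toNormedSpace
  have hc : HasDerivAt (fun x => mulCLM (f x)) (mulCLM f') l := by
    have h := (mulCLM (n := n)).hasFDerivAt.comp_hasDerivAt (x := l) (f := f) (f' := f') (l := ⇑mulCLM) hf
    exact h
  have h := hc.clm_apply hg
  exact h

/-- Transpose as a continuous linear map. -/
noncomputable def transposeCLM : M →L[ℝ] M :=
  LinearMap.toContinuousLinearMap
    ((Matrix.transposeLinearEquiv (Fin n) (Fin n) ℝ ℝ) : M →ₗ[ℝ] M)

@[simp] lemma transposeCLM_apply (a : M) : transposeCLM a = aᵀ := rfl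

lemma HasDerivAt.matrix_transpose {f : ℝ → M} {f' : M} {l : ℝ}
    (hf : HasDerivAt f f' l) :
    HasDerivAt (fun x => (f x)ᵀ) f'ᵀ l := by
  have h := (transposeCLM (n := n)).hasFDerivAt.comp_hasDerivAt l hf
  exact h

/-- Key lemma: the Wronskian-type combination `Xᵀ X' - X'ᵀ X` is constant. -/
lemma wronskian_symm
    (R : ℝ → Matrix (Fin n) (Fin n) ℝ)
    (hRsymm : ∀ l : ℝ, (R l)ᵀ = R l)
    (X : ℝ → Matrix (Fin n) (Fin n) ℝ)
    (hX : ContDiff ℝ 2 X)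
    (hode : ∀ l : ℝ, deriv (deriv X) l = R l * X l)
    (hW0 : (X 0)ᵀ * deriv X 0 - (deriv X 0)ᵀ * X 0 = 0)
    (l : ℝ) : ((X l)ᵀ * deriv X l).IsSymm := by
  have h2 : ContDiff ℝ (1 + 1) X := by norm_num; exact hX
  rw [contDiff_succ_iff_deriv] at h2
  have hXd : Differentiable ℝ X := h2.1
  have hX'd : Differentiable ℝ (deriv X) := (h2.2.2).differentiable one_ne_zero
  set W : ℝ → Matrix (Fin n) (Fin n) ℝ :=
    fun l => (X l)ᵀ * deriv X l - (deriv X l)ᵀ * X l with hWdef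
  have hWderiv : ∀ l, HasDerivAt W 0 l := by
    intro l
    have h1 : HasDerivAt X (deriv X l) l := (hXd l).hasDerivAt
    have h2' : HasDerivAt (deriv X) (deriv (deriv X) l) l := (hX'd l).hasDerivAt
    have hD : HasDerivAt W
        (((deriv X l)ᵀ * deriv X l + (X l)ᵀ * deriv (deriv X) l)
          - ((deriv (deriv X) l)ᵀ * X l + (deriv X l)ᵀ * deriv X l)) l :=
      (h1.matrix_transpose.matrix_mul h2').sub (h2'.matrix_transpose.matrix_mul h1)
    convert hD using 1
    rw [hode l]
    have : (R l * X l)ᵀ = (X l)ᵀ * R l := by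
      rw [Matrix.transpose_mul, hRsymm l]
    rw [this, ← mul_assoc]
    abel
  have hconst : W l = W 0 :=
    is_const_of_deriv_eq_zero (fun x => (hWderiv x).differentiableAt)
      (fun x => (hWderiv x).deriv) l 0
  have : (X l)ᵀ * deriv X l - (deriv X l)ᵀ * X l = 0 := hconst.trans hW0
  have h := sub_eq_zero.mp this
  rw [Matrix.IsSymm, Matrix.transpose_mul, Matrix.transpose_transpose, ← h]

end Aux

/-- Two of the symplectic constraints on the bilocal geodesic operators: for `R(λ)`
symmetric, `A(λ)ᵀ A'(λ)` and `B(λ)ᵀ B'(λ)` are symmetric for all `λ`. -/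
theorem bgo_symmetric_products (n : ℕ)
    (R : ℝ → Matrix (Fin n) (Fin n) ℝ) (hRcont : Continuous R)
    (hRsymm : ∀ l : ℝ, (R l)ᵀ = R l)
    (A B : ℝ → Matrix (Fin n) (Fin n) ℝ)
    (hA : ContDiff ℝ 2 A) (hB : ContDiff ℝ 2 B)
    (hodeA : ∀ l : ℝ, deriv (deriv A) l = R l * A l)
    (hA0 : A 0 = 1) (hA0' : deriv A 0 = 0)
    (hodeB : ∀ l : ℝ, deriv (deriv B) l = R l * B l)
    (hB0 : B 0 = 0) (hB0' : deriv B 0 = 1) :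
    ∀ l : ℝ, ((A l)ᵀ * deriv A l).IsSymm ∧ ((B l)ᵀ * deriv B l).IsSymm := by
  intro l
  constructor
  · exact wronskian_symm R hRsymm A hA hodeA (by simp [hA0, hA0']) l
  · exact wronskian_symm R hRsymm B hB hodeB (by simp [hB0, hB0']) l
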